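/- arXiv:2409.08421 — 5 statements merged into one kernel-verified Lean document; each statement's English description precedes it below -/
import Mathlib

section
/- The ring M₃(ℤ) of 3 × 3 integer matrices has no prime partial ideals; that is, there is no subset 𝔭 of M₃(ℤ) such that for every commutative subring C of M₃(ℤ), the set C ∩ 𝔭 is a prime ideal of C. -/
/-- A subset `𝔭` of a ring `R` is a *prime partial ideal* if for every commutative
subring `C` of `R`, the set `C ∩ 𝔭` is a prime ideal of `C`. -/
def IsPrimePartialIdeal {R : Type*} [Ring R] (𝔭 : Set R) : Prop :=
  ∀ C : Subring R, (∀ a ∈ C, ∀ b ∈ C, a * b = b * a) →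
    ∃ I : Ideal C, I.IsPrime ∧ ∀ x : C, x ∈ I ↔ (x : R) ∈ 𝔭

/-- The ring of 3×3 integer matrices. -/
abbrev PPI.M3 := Matrix (Fin 3) (Fin 3) ℤ

namespace PPI

def E0 : M3 := !![0, 0, -1; 0, 0, 0; 0, 0, 1]
def E1 : M3 := !![0, 0, -1; 0, 0, 1; 0, 0, 1]
def E2 : M3 := !![0, 0, 0; 0, 0, -1; 0, 0, 1]
def E3 : M3 := !![0, 0, 0; 0, 0, 0; 0, 0, 1]
def E4 : M3 := !![1, 0, 1; -1, 0, -1; 0, 0, 0]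
def E5 : M3 := !![0, 0, 0; -1, 0, -1; 1, 0, 1]
def E6 : M3 := !![0, 0, 0; 0, 0, 0; 1, 0, 1]
def E7 : M3 := !![0, -1, 0; 0, 1, 0; 0, 0, 0]
def E8 : M3 := !![0, -1, 0; 0, 1, 0; 0, 1, 0]
def E9 : M3 := !![0, 0, 0; 0, 1, 0; 0, 0, 0]
def E10 : M3 := !![0, 0, 0; 0, 1, 0; 0, -1, 0]
def E11 : M3 := !![1, 1, 0; 0, 0, 0; -1, -1, 0]
def E12 : M3 := !![-1, -1, -1; 1, 1, 1; 1, 1, 1]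
def E13 : M3 := !![0, 0, 0; 1, 1, 1; 0, 0, 0]
def E14 : M3 := !![0, 0, 0; 0, 0, 0; 1, 1, 1]
def E15 : M3 := !![2, 1, 1; 0, 0, 0; -2, -1, -1]
def E16 : M3 := !![1, 0, 0; 0, 0, 0; -1, 0, 0]
def E17 : M3 := !![0, 0, 0; 1, 1, 0; 0, 0, 0]
def E18 : M3 := !![0, 0, 0; 1, 1, 0; -1, -1, 0]
def E19 : M3 := !![2, 1, 1; -2, -1, -1; 0, 0, 0]
def E20 : M3 := !![1, 0, 0; -1, 0, 0; 0, 0, 0]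
def E21 : M3 := !![1, 0, 0; -1, 0, 0; -1, 0, 0]
def E22 : M3 := !![0, 0, 0; 2, 1, 1; 0, 0, 0]
def E23 : M3 := !![0, 0, 0; 0, 0, 0; 2, 1, 1]

/-- Any set of pairwise commuting elements of `M₃(ℤ)` is contained in a commutative
subring (its double centralizer), so a prime partial ideal induces a prime ideal of a
commutative subring containing that set. -/
lemma exists_ideal {𝔭 : Set M3} (h : IsPrimePartialIdeal 𝔭) (S : Set M3)
    (hS : ∀ x ∈ S, ∀ y ∈ S, x * y = y * x) :
    ∃ C : Subring M3, (∀ x ∈ S, x ∈ C) ∧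
      ∃ I : Ideal C, I.IsPrime ∧ ∀ x : C, x ∈ I ↔ (x : M3) ∈ 𝔭 := by
  refine ⟨Subring.centralizer (Set.centralizer S), ?_, ?_⟩
  · intro x hx
    rw [Subring.mem_centralizer_iff]
    intro g hg
    exact (hg x hx).symm
  · apply h
    intro a ha b hb
    have hsub : Set.centralizer (Set.centralizer S) ⊆ Set.centralizer S :=
      Set.centralizer_subset (fun x hx => Set.mem_centralizer_iff.mpr (fun m hm => hS m hm x hx))
    have hb' : b ∈ Set.centralizer S :=
      hsub (Set.mem_centralizer_iff.mpr (Subring.mem_centralizer_iff.mp hb))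
    exact ((Subring.mem_centralizer_iff.mp ha) b hb').symm

/-- If `a * b = b * a = 0`, then `a` and `b` lie in a common commutative subring `C`;
the prime ideal `C ∩ 𝔭` contains `a * b = 0`, so `a ∈ 𝔭` or `b ∈ 𝔭`. -/
lemma mem_or_mem {𝔭 : Set M3} (h : IsPrimePartialIdeal 𝔭) {a b : M3}
    (hab : a * b = 0) (hba : b * a = 0) : a ∈ 𝔭 ∨ b ∈ 𝔭 := by
  obtain ⟨C, hC, I, hI, hiff⟩ := exists_ideal h {a, b} (by
    intro x hx y hy
    rcases hx with rfl | rfl <;> rcases hy with rfl | rfl <;> simp [hab, hba])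
  have hA : a ∈ C := hC a (Or.inl rfl)
  have hB : b ∈ C := hC b (Or.inr rfl)
  have hmem : (⟨a, hA⟩ : C) * ⟨b, hB⟩ ∈ I := by
    have : (⟨a, hA⟩ : C) * ⟨b, hB⟩ = 0 := Subtype.ext hab
    rw [this]; exact I.zero_mem
  rcases hI.mem_or_mem hmem with hx | hx
  · exact Or.inl ((hiff _).mp hx)
  · exact Or.inr ((hiff _).mp hx)

/-- If `a, b, c` pairwise multiply to zero and sum to `1`, they cannot all lie in `𝔭`:
they span a commutative subring `C` and the prime ideal `C ∩ 𝔭` is proper. -/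
lemma not_all_mem {𝔭 : Set M3} (h : IsPrimePartialIdeal 𝔭) {a b c : M3}
    (hab : a * b = 0) (hba : b * a = 0) (hac : a * c = 0) (hca : c * a = 0)
    (hbc : b * c = 0) (hcb : c * b = 0) (hsum : a + b + c = 1) :
    ¬ (a ∈ 𝔭 ∧ b ∈ 𝔭 ∧ c ∈ 𝔭) := by
  rintro ⟨ha, hb, hc⟩
  obtain ⟨C, hC, I, hI, hiff⟩ := exists_ideal h {a, b, c} (by
    intro x hx y hy
    rcases hx with rfl | rfl | rfl <;> rcases hy with rfl | rfl | rfl <;>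
      simp [hab, hba, hac, hca, hbc, hcb])
  have hA : a ∈ C := hC a (Or.inl rfl)
  have hB : b ∈ C := hC b (Or.inr (Or.inl rfl))
  have hCc : c ∈ C := hC c (Or.inr (Or.inr rfl))
  have h1 : (1 : C) ∈ I := by
    have he : (⟨a, hA⟩ : C) + ⟨b, hB⟩ + ⟨c, hCc⟩ = 1 := Subtype.ext hsum
    rw [← he]
    exact add_mem (add_mem ((hiff _).mpr ha) ((hiff _).mpr hb)) ((hiff _).mpr hc)
  exact hI.ne_top ((Ideal.eq_top_iff_one I).mpr h1)

/-- An integer indicator for an arbitrary proposition. -/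
lemma exists_indicator (p : Prop) : ∃ x : ℤ, x = 0 ↔ p := by
  classical
  exact ⟨if p then 0 else 1, by by_cases hp : p <;> simp [hp]⟩

lemma m0_4 : E0 * E4 = 0 := by decide
lemma m0_7 : E0 * E7 = 0 := by decide
lemma m0_9 : E0 * E9 = 0 := by decide
lemma m0_13 : E0 * E13 = 0 := by decide
lemma m1_4 : E1 * E4 = 0 := by decide
lemma m1_17 : E1 * E17 = 0 := by decide
lemma m1_19 : E1 * E19 = 0 := by decide
lemma m1_22 : E1 * E22 = 0 := by decide
lemma m2_13 : E2 * E13 = 0 := by decide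
lemma m2_19 : E2 * E19 = 0 := by decide
lemma m2_20 : E2 * E20 = 0 := by decide
lemma m2_22 : E2 * E22 = 0 := by decide
lemma m3_7 : E3 * E7 = 0 := by decide
lemma m3_9 : E3 * E9 = 0 := by decide
lemma m3_17 : E3 * E17 = 0 := by decide
lemma m3_20 : E3 * E20 = 0 := by decide
lemma m4_0 : E4 * E0 = 0 := by decide
lemma m4_1 : E4 * E1 = 0 := by decide
lemma m4_11 : E4 * E11 = 0 := by decide
lemma m4_12 : E4 * E12 = 0 := by decide
lemma m4_13 : E4 * E13 = 0 := by decide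
lemma m4_17 : E4 * E17 = 0 := by decide
lemma m5_12 : E5 * E12 = 0 := by decide
lemma m5_13 : E5 * E13 = 0 := by decide
lemma m5_15 : E5 * E15 = 0 := by decide
lemma m5_16 : E5 * E16 = 0 := by decide
lemma m5_21 : E5 * E21 = 0 := by decide
lemma m5_22 : E5 * E22 = 0 := by decide
lemma m6_8 : E6 * E8 = 0 := by decide
lemma m6_9 : E6 * E9 = 0 := by decide
lemma m6_11 : E6 * E11 = 0 := by decide
lemma m6_16 : E6 * E16 = 0 := by decide
lemma m6_17 : E6 * E17 = 0 := by decide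
lemma m6_21 : E6 * E21 = 0 := by decide
lemma m7_0 : E7 * E0 = 0 := by decide
lemma m7_3 : E7 * E3 = 0 := by decide
lemma m7_11 : E7 * E11 = 0 := by decide
lemma m7_14 : E7 * E14 = 0 := by decide
lemma m8_6 : E8 * E6 = 0 := by decide
lemma m8_11 : E8 * E11 = 0 := by decide
lemma m8_15 : E8 * E15 = 0 := by decide
lemma m8_23 : E8 * E23 = 0 := by decide
lemma m9_0 : E9 * E0 = 0 := by decide
lemma m9_3 : E9 * E3 = 0 := by decide
lemma m9_6 : E9 * E6 = 0 := by decide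
lemma m9_16 : E9 * E16 = 0 := by decide
lemma m10_14 : E10 * E14 = 0 := by decide
lemma m10_15 : E10 * E15 = 0 := by decide
lemma m10_16 : E10 * E16 = 0 := by decide
lemma m10_23 : E10 * E23 = 0 := by decide
lemma m11_4 : E11 * E4 = 0 := by decide
lemma m11_6 : E11 * E6 = 0 := by decide
lemma m11_7 : E11 * E7 = 0 := by decide
lemma m11_8 : E11 * E8 = 0 := by decide
lemma m11_12 : E11 * E12 = 0 := by decide
lemma m11_14 : E11 * E14 = 0 := by decide
lemma m12_4 : E12 * E4 = 0 := by decide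
lemma m12_5 : E12 * E5 = 0 := by decide
lemma m12_11 : E12 * E11 = 0 := by decide
lemma m12_15 : E12 * E15 = 0 := by decide
lemma m12_18 : E12 * E18 = 0 := by decide
lemma m12_19 : E12 * E19 = 0 := by decide
lemma m13_0 : E13 * E0 = 0 := by decide
lemma m13_2 : E13 * E2 = 0 := by decide
lemma m13_4 : E13 * E4 = 0 := by decide
lemma m13_5 : E13 * E5 = 0 := by decide
lemma m13_16 : E13 * E16 = 0 := by decide
lemma m13_20 : E13 * E20 = 0 := by decide
lemma m14_7 : E14 * E7 = 0 := by decide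
lemma m14_10 : E14 * E10 = 0 := by decide
lemma m14_11 : E14 * E11 = 0 := by decide
lemma m14_16 : E14 * E16 = 0 := by decide
lemma m14_18 : E14 * E18 = 0 := by decide
lemma m14_20 : E14 * E20 = 0 := by decide
lemma m15_5 : E15 * E5 = 0 := by decide
lemma m15_8 : E15 * E8 = 0 := by decide
lemma m15_10 : E15 * E10 = 0 := by decide
lemma m15_12 : E15 * E12 = 0 := by decide
lemma m16_5 : E16 * E5 = 0 := by decide
lemma m16_6 : E16 * E6 = 0 := by decide
lemma m16_9 : E16 * E9 = 0 := by decide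
lemma m16_10 : E16 * E10 = 0 := by decide
lemma m16_13 : E16 * E13 = 0 := by decide
lemma m16_14 : E16 * E14 = 0 := by decide
lemma m17_1 : E17 * E1 = 0 := by decide
lemma m17_3 : E17 * E3 = 0 := by decide
lemma m17_4 : E17 * E4 = 0 := by decide
lemma m17_6 : E17 * E6 = 0 := by decide
lemma m17_20 : E17 * E20 = 0 := by decide
lemma m17_21 : E17 * E21 = 0 := by decide
lemma m18_12 : E18 * E12 = 0 := by decide
lemma m18_14 : E18 * E14 = 0 := by decide
lemma m18_19 : E18 * E19 = 0 := by decide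
lemma m18_20 : E18 * E20 = 0 := by decide
lemma m18_21 : E18 * E21 = 0 := by decide
lemma m18_23 : E18 * E23 = 0 := by decide
lemma m19_1 : E19 * E1 = 0 := by decide
lemma m19_2 : E19 * E2 = 0 := by decide
lemma m19_12 : E19 * E12 = 0 := by decide
lemma m19_18 : E19 * E18 = 0 := by decide
lemma m20_2 : E20 * E2 = 0 := by decide
lemma m20_3 : E20 * E3 = 0 := by decide
lemma m20_13 : E20 * E13 = 0 := by decide
lemma m20_14 : E20 * E14 = 0 := by decide
lemma m20_17 : E20 * E17 = 0 := by decide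
lemma m20_18 : E20 * E18 = 0 := by decide
lemma m21_5 : E21 * E5 = 0 := by decide
lemma m21_6 : E21 * E6 = 0 := by decide
lemma m21_17 : E21 * E17 = 0 := by decide
lemma m21_18 : E21 * E18 = 0 := by decide
lemma m21_22 : E21 * E22 = 0 := by decide
lemma m21_23 : E21 * E23 = 0 := by decide
lemma m22_1 : E22 * E1 = 0 := by decide
lemma m22_2 : E22 * E2 = 0 := by decide
lemma m22_5 : E22 * E5 = 0 := by decide
lemma m22_21 : E22 * E21 = 0 := by decide
lemma m23_8 : E23 * E8 = 0 := by decide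
lemma m23_10 : E23 * E10 = 0 := by decide
lemma m23_18 : E23 * E18 = 0 := by decide
lemma m23_21 : E23 * E21 = 0 := by decide
lemma s0 : E0 + E4 + E13 = 1 := by decide
lemma s1 : E11 + E7 + E14 = 1 := by decide
lemma s2 : E15 + E12 + E5 = 1 := by decide
lemma s3 : E11 + E8 + E6 = 1 := by decide
lemma s4 : E16 + E9 + E6 = 1 := by decide
lemma s5 : E16 + E10 + E14 = 1 := by decide
lemma s6 : E4 + E1 + E17 = 1 := by decide
lemma s7 : E19 + E12 + E18 = 1 := by decide
lemma s8 : E20 + E13 + E2 = 1 := by decide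
lemma s9 : E20 + E17 + E3 = 1 := by decide
lemma s10 : E21 + E22 + E5 = 1 := by decide
lemma s11 : E21 + E18 + E23 = 1 := by decide

end PPI

set_option maxHeartbeats 1000000 in
open PPI in
/-- The ring `M₃(ℤ)` of `3 × 3` integer matrices has no prime partial ideals. -/
theorem no_prime_partial_ideal_matrix_int :
    ¬ ∃ 𝔭 : Set (Matrix (Fin 3) (Fin 3) ℤ), IsPrimePartialIdeal 𝔭 := by
  rintro ⟨𝔭, h⟩
  obtain ⟨x0, hx0⟩ := exists_indicator (E0 ∈ 𝔭)
  obtain ⟨x1, hx1⟩ := exists_indicator (E1 ∈ 𝔭)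
  obtain ⟨x2, hx2⟩ := exists_indicator (E2 ∈ 𝔭)
  obtain ⟨x3, hx3⟩ := exists_indicator (E3 ∈ 𝔭)
  obtain ⟨x4, hx4⟩ := exists_indicator (E4 ∈ 𝔭)
  obtain ⟨x5, hx5⟩ := exists_indicator (E5 ∈ 𝔭)
  obtain ⟨x6, hx6⟩ := exists_indicator (E6 ∈ 𝔭)
  obtain ⟨x7, hx7⟩ := exists_indicator (E7 ∈ 𝔭)
  obtain ⟨x8, hx8⟩ := exists_indicator (E8 ∈ 𝔭)
  obtain ⟨x9, hx9⟩ := exists_indicator (E9 ∈ 𝔭)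
  obtain ⟨x10, hx10⟩ := exists_indicator (E10 ∈ 𝔭)
  obtain ⟨x11, hx11⟩ := exists_indicator (E11 ∈ 𝔭)
  obtain ⟨x12, hx12⟩ := exists_indicator (E12 ∈ 𝔭)
  obtain ⟨x13, hx13⟩ := exists_indicator (E13 ∈ 𝔭)
  obtain ⟨x14, hx14⟩ := exists_indicator (E14 ∈ 𝔭)
  obtain ⟨x15, hx15⟩ := exists_indicator (E15 ∈ 𝔭)
  obtain ⟨x16, hx16⟩ := exists_indicator (E16 ∈ 𝔭)
  obtain ⟨x17, hx17⟩ := exists_indicator (E17 ∈ 𝔭)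
  obtain ⟨x18, hx18⟩ := exists_indicator (E18 ∈ 𝔭)
  obtain ⟨x19, hx19⟩ := exists_indicator (E19 ∈ 𝔭)
  obtain ⟨x20, hx20⟩ := exists_indicator (E20 ∈ 𝔭)
  obtain ⟨x21, hx21⟩ := exists_indicator (E21 ∈ 𝔭)
  obtain ⟨x22, hx22⟩ := exists_indicator (E22 ∈ 𝔭)
  obtain ⟨x23, hx23⟩ := exists_indicator (E23 ∈ 𝔭)
  have ht0 : ¬ (x0 = 0 ∧ x4 = 0 ∧ x13 = 0) := fun ⟨u, v, w⟩ =>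
    not_all_mem h m0_4 m4_0 m0_13 m13_0 m4_13 m13_4 s0
      ⟨hx0.mp u, hx4.mp v, hx13.mp w⟩
  have ht1 : ¬ (x11 = 0 ∧ x7 = 0 ∧ x14 = 0) := fun ⟨u, v, w⟩ =>
    not_all_mem h m11_7 m7_11 m11_14 m14_11 m7_14 m14_7 s1
      ⟨hx11.mp u, hx7.mp v, hx14.mp w⟩
  have ht2 : ¬ (x15 = 0 ∧ x12 = 0 ∧ x5 = 0) := fun ⟨u, v, w⟩ =>
    not_all_mem h m15_12 m12_15 m15_5 m5_15 m12_5 m5_12 s2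
      ⟨hx15.mp u, hx12.mp v, hx5.mp w⟩
  have ht3 : ¬ (x11 = 0 ∧ x8 = 0 ∧ x6 = 0) := fun ⟨u, v, w⟩ =>
    not_all_mem h m11_8 m8_11 m11_6 m6_11 m8_6 m6_8 s3
      ⟨hx11.mp u, hx8.mp v, hx6.mp w⟩
  have ht4 : ¬ (x16 = 0 ∧ x9 = 0 ∧ x6 = 0) := fun ⟨u, v, w⟩ =>
    not_all_mem h m16_9 m9_16 m16_6 m6_16 m9_6 m6_9 s4
      ⟨hx16.mp u, hx9.mp v, hx6.mp w⟩
  have ht5 : ¬ (x16 = 0 ∧ x10 = 0 ∧ x14 = 0) := fun ⟨u, v, w⟩ =>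
    not_all_mem h m16_10 m10_16 m16_14 m14_16 m10_14 m14_10 s5
      ⟨hx16.mp u, hx10.mp v, hx14.mp w⟩
  have ht6 : ¬ (x4 = 0 ∧ x1 = 0 ∧ x17 = 0) := fun ⟨u, v, w⟩ =>
    not_all_mem h m4_1 m1_4 m4_17 m17_4 m1_17 m17_1 s6
      ⟨hx4.mp u, hx1.mp v, hx17.mp w⟩
  have ht7 : ¬ (x19 = 0 ∧ x12 = 0 ∧ x18 = 0) := fun ⟨u, v, w⟩ =>
    not_all_mem h m19_12 m12_19 m19_18 m18_19 m12_18 m18_12 s7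
      ⟨hx19.mp u, hx12.mp v, hx18.mp w⟩
  have ht8 : ¬ (x20 = 0 ∧ x13 = 0 ∧ x2 = 0) := fun ⟨u, v, w⟩ =>
    not_all_mem h m20_13 m13_20 m20_2 m2_20 m13_2 m2_13 s8
      ⟨hx20.mp u, hx13.mp v, hx2.mp w⟩
  have ht9 : ¬ (x20 = 0 ∧ x17 = 0 ∧ x3 = 0) := fun ⟨u, v, w⟩ =>
    not_all_mem h m20_17 m17_20 m20_3 m3_20 m17_3 m3_17 s9
      ⟨hx20.mp u, hx17.mp v, hx3.mp w⟩
  have ht10 : ¬ (x21 = 0 ∧ x22 = 0 ∧ x5 = 0) := fun ⟨u, v, w⟩ =>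
    not_all_mem h m21_22 m22_21 m21_5 m5_21 m22_5 m5_22 s10
      ⟨hx21.mp u, hx22.mp v, hx5.mp w⟩
  have ht11 : ¬ (x21 = 0 ∧ x18 = 0 ∧ x23 = 0) := fun ⟨u, v, w⟩ =>
    not_all_mem h m21_18 m18_21 m21_23 m23_21 m18_23 m23_18 s11
      ⟨hx21.mp u, hx18.mp v, hx23.mp w⟩
  have hp0 : x0 = 0 ∨ x7 = 0 :=
    (mem_or_mem h m0_7 m7_0).imp hx0.mpr hx7.mpr
  have hp1 : x0 = 0 ∨ x9 = 0 :=
    (mem_or_mem h m0_9 m9_0).imp hx0.mpr hx9.mpr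
  have hp2 : x1 = 0 ∨ x19 = 0 :=
    (mem_or_mem h m1_19 m19_1).imp hx1.mpr hx19.mpr
  have hp3 : x1 = 0 ∨ x22 = 0 :=
    (mem_or_mem h m1_22 m22_1).imp hx1.mpr hx22.mpr
  have hp4 : x2 = 0 ∨ x19 = 0 :=
    (mem_or_mem h m2_19 m19_2).imp hx2.mpr hx19.mpr
  have hp5 : x2 = 0 ∨ x22 = 0 :=
    (mem_or_mem h m2_22 m22_2).imp hx2.mpr hx22.mpr
  have hp6 : x3 = 0 ∨ x7 = 0 :=
    (mem_or_mem h m3_7 m7_3).imp hx3.mpr hx7.mpr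
  have hp7 : x3 = 0 ∨ x9 = 0 :=
    (mem_or_mem h m3_9 m9_3).imp hx3.mpr hx9.mpr
  have hp8 : x4 = 0 ∨ x11 = 0 :=
    (mem_or_mem h m4_11 m11_4).imp hx4.mpr hx11.mpr
  have hp9 : x4 = 0 ∨ x12 = 0 :=
    (mem_or_mem h m4_12 m12_4).imp hx4.mpr hx12.mpr
  have hp10 : x4 = 0 ∨ x13 = 0 :=
    (mem_or_mem h m4_13 m13_4).imp hx4.mpr hx13.mpr
  have hp11 : x4 = 0 ∨ x17 = 0 :=
    (mem_or_mem h m4_17 m17_4).imp hx4.mpr hx17.mpr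
  have hp12 : x5 = 0 ∨ x12 = 0 :=
    (mem_or_mem h m5_12 m12_5).imp hx5.mpr hx12.mpr
  have hp13 : x5 = 0 ∨ x13 = 0 :=
    (mem_or_mem h m5_13 m13_5).imp hx5.mpr hx13.mpr
  have hp14 : x5 = 0 ∨ x16 = 0 :=
    (mem_or_mem h m5_16 m16_5).imp hx5.mpr hx16.mpr
  have hp15 : x5 = 0 ∨ x21 = 0 :=
    (mem_or_mem h m5_21 m21_5).imp hx5.mpr hx21.mpr
  have hp16 : x6 = 0 ∨ x11 = 0 :=
    (mem_or_mem h m6_11 m11_6).imp hx6.mpr hx11.mpr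
  have hp17 : x6 = 0 ∨ x16 = 0 :=
    (mem_or_mem h m6_16 m16_6).imp hx6.mpr hx16.mpr
  have hp18 : x6 = 0 ∨ x17 = 0 :=
    (mem_or_mem h m6_17 m17_6).imp hx6.mpr hx17.mpr
  have hp19 : x6 = 0 ∨ x21 = 0 :=
    (mem_or_mem h m6_21 m21_6).imp hx6.mpr hx21.mpr
  have hp20 : x8 = 0 ∨ x15 = 0 :=
    (mem_or_mem h m8_15 m15_8).imp hx8.mpr hx15.mpr
  have hp21 : x8 = 0 ∨ x23 = 0 :=
    (mem_or_mem h m8_23 m23_8).imp hx8.mpr hx23.mpr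
  have hp22 : x10 = 0 ∨ x15 = 0 :=
    (mem_or_mem h m10_15 m15_10).imp hx10.mpr hx15.mpr
  have hp23 : x10 = 0 ∨ x23 = 0 :=
    (mem_or_mem h m10_23 m23_10).imp hx10.mpr hx23.mpr
  have hp24 : x11 = 0 ∨ x12 = 0 :=
    (mem_or_mem h m11_12 m12_11).imp hx11.mpr hx12.mpr
  have hp25 : x11 = 0 ∨ x14 = 0 :=
    (mem_or_mem h m11_14 m14_11).imp hx11.mpr hx14.mpr
  have hp26 : x12 = 0 ∨ x18 = 0 :=
    (mem_or_mem h m12_18 m18_12).imp hx12.mpr hx18.mpr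
  have hp27 : x13 = 0 ∨ x16 = 0 :=
    (mem_or_mem h m13_16 m16_13).imp hx13.mpr hx16.mpr
  have hp28 : x13 = 0 ∨ x20 = 0 :=
    (mem_or_mem h m13_20 m20_13).imp hx13.mpr hx20.mpr
  have hp29 : x14 = 0 ∨ x16 = 0 :=
    (mem_or_mem h m14_16 m16_14).imp hx14.mpr hx16.mpr
  have hp30 : x14 = 0 ∨ x18 = 0 :=
    (mem_or_mem h m14_18 m18_14).imp hx14.mpr hx18.mpr
  have hp31 : x14 = 0 ∨ x20 = 0 :=
    (mem_or_mem h m14_20 m20_14).imp hx14.mpr hx20.mpr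
  have hp32 : x17 = 0 ∨ x20 = 0 :=
    (mem_or_mem h m17_20 m20_17).imp hx17.mpr hx20.mpr
  have hp33 : x17 = 0 ∨ x21 = 0 :=
    (mem_or_mem h m17_21 m21_17).imp hx17.mpr hx21.mpr
  have hp34 : x18 = 0 ∨ x20 = 0 :=
    (mem_or_mem h m18_20 m20_18).imp hx18.mpr hx20.mpr
  have hp35 : x18 = 0 ∨ x21 = 0 :=
    (mem_or_mem h m18_21 m21_18).imp hx18.mpr hx21.mpr
  by_cases hv4 : x4 = 0
  · 
    by_cases hv5 : x5 = 0
    · 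
      by_cases hv6 : x6 = 0
      · 
        by_cases hv14 : x14 = 0
        · 
          by_cases hv18 : x18 = 0
          · 
            by_cases hv13 : x13 = 0
            · 
              have hv0 : ¬ x0 = 0 := fun hw => ht0 ⟨hw, hv4, hv13⟩
              have hv7 : x7 = 0 := hp0.resolve_left hv0
              have hv9 : x9 = 0 := hp1.resolve_left hv0
              have hv11 : ¬ x11 = 0 := fun hw => ht1 ⟨hw, hv7, hv14⟩
              have hv16 : ¬ x16 = 0 := fun hw => ht4 ⟨hw, hv9, hv6⟩
              have hv12 : x12 = 0 := hp24.resolve_left hv11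
              have hv15 : ¬ x15 = 0 := fun hw => ht2 ⟨hw, hv12, hv5⟩
              have hv19 : ¬ x19 = 0 := fun hw => ht7 ⟨hw, hv12, hv18⟩
              have hv1 : x1 = 0 := hp2.resolve_right hv19
              have hv2 : x2 = 0 := hp4.resolve_right hv19
              have hv8 : x8 = 0 := hp20.resolve_right hv15
              have hv10 : x10 = 0 := hp22.resolve_right hv15
              have hv17 : ¬ x17 = 0 := fun hw => ht6 ⟨hv4, hv1, hw⟩
              have hv20 : ¬ x20 = 0 := fun hw => ht8 ⟨hw, hv13, hv2⟩
              exact hv20 (hp32.resolve_left hv17)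
            · 
              have hv16 : x16 = 0 := hp27.resolve_left hv13
              have hv20 : x20 = 0 := hp28.resolve_left hv13
              have hv9 : ¬ x9 = 0 := fun hw => ht4 ⟨hv16, hw, hv6⟩
              have hv10 : ¬ x10 = 0 := fun hw => ht5 ⟨hv16, hw, hv14⟩
              have hv0 : x0 = 0 := hp1.resolve_right hv9
              have hv3 : x3 = 0 := hp7.resolve_right hv9
              have hv15 : x15 = 0 := hp22.resolve_left hv10
              have hv23 : x23 = 0 := hp23.resolve_left hv10
              have hv12 : ¬ x12 = 0 := fun hw => ht2 ⟨hv15, hw, hv5⟩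
              have hv17 : ¬ x17 = 0 := fun hw => ht9 ⟨hv20, hw, hv3⟩
              have hv21 : ¬ x21 = 0 := fun hw => ht11 ⟨hw, hv18, hv23⟩
              have hv11 : x11 = 0 := hp24.resolve_right hv12
              exact hv21 (hp33.resolve_left hv17)
          · 
            have hv12 : x12 = 0 := hp26.resolve_right hv18
            have hv20 : x20 = 0 := hp34.resolve_left hv18
            have hv21 : x21 = 0 := hp35.resolve_left hv18
            have hv15 : ¬ x15 = 0 := fun hw => ht2 ⟨hw, hv12, hv5⟩
            have hv22 : ¬ x22 = 0 := fun hw => ht10 ⟨hv21, hw, hv5⟩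
            have hv1 : x1 = 0 := hp3.resolve_right hv22
            have hv2 : x2 = 0 := hp5.resolve_right hv22
            have hv8 : x8 = 0 := hp20.resolve_right hv15
            have hv10 : x10 = 0 := hp22.resolve_right hv15
            have hv11 : ¬ x11 = 0 := fun hw => ht3 ⟨hw, hv8, hv6⟩
            have hv16 : ¬ x16 = 0 := fun hw => ht5 ⟨hw, hv10, hv14⟩
            have hv17 : ¬ x17 = 0 := fun hw => ht6 ⟨hv4, hv1, hw⟩
            have hv13 : ¬ x13 = 0 := fun hw => ht8 ⟨hv20, hw, hv2⟩
            exact hv16 (hp27.resolve_left hv13)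
        · 
          have hv11 : x11 = 0 := hp25.resolve_right hv14
          have hv16 : x16 = 0 := hp29.resolve_left hv14
          have hv18 : x18 = 0 := hp30.resolve_left hv14
          have hv20 : x20 = 0 := hp31.resolve_left hv14
          have hv8 : ¬ x8 = 0 := fun hw => ht3 ⟨hv11, hw, hv6⟩
          have hv9 : ¬ x9 = 0 := fun hw => ht4 ⟨hv16, hw, hv6⟩
          have hv0 : x0 = 0 := hp1.resolve_right hv9
          have hv3 : x3 = 0 := hp7.resolve_right hv9
          have hv15 : x15 = 0 := hp20.resolve_left hv8
          have hv23 : x23 = 0 := hp21.resolve_left hv8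
          have hv13 : ¬ x13 = 0 := fun hw => ht0 ⟨hv0, hv4, hw⟩
          have hv12 : ¬ x12 = 0 := fun hw => ht2 ⟨hv15, hw, hv5⟩
          have hv17 : ¬ x17 = 0 := fun hw => ht9 ⟨hv20, hw, hv3⟩
          have hv21 : ¬ x21 = 0 := fun hw => ht11 ⟨hw, hv18, hv23⟩
          exact hv21 (hp33.resolve_left hv17)
      · 
        have hv11 : x11 = 0 := hp16.resolve_left hv6
        have hv16 : x16 = 0 := hp17.resolve_left hv6
        have hv17 : x17 = 0 := hp18.resolve_left hv6
        have hv21 : x21 = 0 := hp19.resolve_left hv6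
        have hv1 : ¬ x1 = 0 := fun hw => ht6 ⟨hv4, hw, hv17⟩
        have hv22 : ¬ x22 = 0 := fun hw => ht10 ⟨hv21, hw, hv5⟩
        have hv19 : x19 = 0 := hp2.resolve_left hv1
        exact hv22 (hp3.resolve_left hv1)
    · 
      have hv12 : x12 = 0 := hp12.resolve_left hv5
      have hv13 : x13 = 0 := hp13.resolve_left hv5
      have hv16 : x16 = 0 := hp14.resolve_left hv5
      have hv21 : x21 = 0 := hp15.resolve_left hv5
      have hv0 : ¬ x0 = 0 := fun hw => ht0 ⟨hw, hv4, hv13⟩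
      have hv7 : x7 = 0 := hp0.resolve_left hv0
      have hv9 : x9 = 0 := hp1.resolve_left hv0
      have hv6 : ¬ x6 = 0 := fun hw => ht4 ⟨hv16, hv9, hw⟩
      have hv11 : x11 = 0 := hp16.resolve_left hv6
      have hv17 : x17 = 0 := hp18.resolve_left hv6
      have hv14 : ¬ x14 = 0 := fun hw => ht1 ⟨hv11, hv7, hw⟩
      have hv1 : ¬ x1 = 0 := fun hw => ht6 ⟨hv4, hw, hv17⟩
      have hv19 : x19 = 0 := hp2.resolve_left hv1
      have hv22 : x22 = 0 := hp3.resolve_left hv1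
      have hv18 : x18 = 0 := hp30.resolve_left hv14
      have hv20 : x20 = 0 := hp31.resolve_left hv14
      exact ht7 ⟨hv19, hv12, hv18⟩
  · 
    have hv11 : x11 = 0 := hp8.resolve_left hv4
    have hv12 : x12 = 0 := hp9.resolve_left hv4
    have hv13 : x13 = 0 := hp10.resolve_left hv4
    have hv17 : x17 = 0 := hp11.resolve_left hv4
    by_cases hv16 : x16 = 0
    · 
      by_cases hv21 : x21 = 0
      · 
        by_cases hv14 : x14 = 0
        · 
          have hv7 : ¬ x7 = 0 := fun hw => ht1 ⟨hv11, hw, hv14⟩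
          have hv10 : ¬ x10 = 0 := fun hw => ht5 ⟨hv16, hw, hv14⟩
          have hv0 : x0 = 0 := hp0.resolve_right hv7
          have hv3 : x3 = 0 := hp6.resolve_right hv7
          have hv15 : x15 = 0 := hp22.resolve_left hv10
          have hv23 : x23 = 0 := hp23.resolve_left hv10
          have hv5 : ¬ x5 = 0 := fun hw => ht2 ⟨hv15, hv12, hw⟩
          have hv20 : ¬ x20 = 0 := fun hw => ht9 ⟨hw, hv17, hv3⟩
          have hv18 : ¬ x18 = 0 := fun hw => ht11 ⟨hv21, hw, hv23⟩
          exact hv20 (hp34.resolve_left hv18)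
        · 
          have hv18 : x18 = 0 := hp30.resolve_left hv14
          have hv20 : x20 = 0 := hp31.resolve_left hv14
          have hv19 : ¬ x19 = 0 := fun hw => ht7 ⟨hw, hv12, hv18⟩
          have hv2 : ¬ x2 = 0 := fun hw => ht8 ⟨hv20, hv13, hw⟩
          have hv3 : ¬ x3 = 0 := fun hw => ht9 ⟨hv20, hv17, hw⟩
          have hv23 : ¬ x23 = 0 := fun hw => ht11 ⟨hv21, hv18, hw⟩
          have hv1 : x1 = 0 := hp2.resolve_right hv19
          exact hv19 (hp4.resolve_left hv2)
      · 
        have hv5 : x5 = 0 := hp15.resolve_right hv21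
        have hv6 : x6 = 0 := hp19.resolve_right hv21
        have hv18 : x18 = 0 := hp35.resolve_right hv21
        have hv15 : ¬ x15 = 0 := fun hw => ht2 ⟨hw, hv12, hv5⟩
        have hv8 : ¬ x8 = 0 := fun hw => ht3 ⟨hv11, hw, hv6⟩
        have hv9 : ¬ x9 = 0 := fun hw => ht4 ⟨hv16, hw, hv6⟩
        have hv19 : ¬ x19 = 0 := fun hw => ht7 ⟨hw, hv12, hv18⟩
        have hv0 : x0 = 0 := hp1.resolve_right hv9
        have hv1 : x1 = 0 := hp2.resolve_right hv19
        have hv2 : x2 = 0 := hp4.resolve_right hv19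
        have hv3 : x3 = 0 := hp7.resolve_right hv9
        exact hv15 (hp20.resolve_left hv8)
    · 
      have hv5 : x5 = 0 := hp14.resolve_right hv16
      have hv6 : x6 = 0 := hp17.resolve_right hv16
      have hv14 : x14 = 0 := hp29.resolve_right hv16
      have hv7 : ¬ x7 = 0 := fun hw => ht1 ⟨hv11, hw, hv14⟩
      have hv15 : ¬ x15 = 0 := fun hw => ht2 ⟨hw, hv12, hv5⟩
      have hv8 : ¬ x8 = 0 := fun hw => ht3 ⟨hv11, hw, hv6⟩
      have hv0 : x0 = 0 := hp0.resolve_right hv7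
      have hv3 : x3 = 0 := hp6.resolve_right hv7
      exact hv15 (hp20.resolve_left hv8)
end

section
/- If f : R → S is a homomorphism of rings and 𝔭 is a prime partial ideal of S, then f⁻¹(𝔭) is a prime partial ideal of R. -/
/-- The preimage of a prime partial ideal under a ring homomorphism is a prime
partial ideal. -/
theorem isPrimePartialIdeal_preimage {R S : Type*} [Ring R] [Ring S] (f : R →+* S)
    (𝔭 : Set S) (h : IsPrimePartialIdeal 𝔭) : IsPrimePartialIdeal (f ⁻¹' 𝔭) := by
  intro C hC
  set g : C →+* S := f.comp C.subtype with hg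
  have hcomm : ∀ a ∈ g.range, ∀ b ∈ g.range, a * b = b * a := by
    rintro _ ⟨a, rfl⟩ _ ⟨b, rfl⟩
    rw [← map_mul, ← map_mul]
    exact congrArg g (Subtype.ext (hC a a.2 b b.2))
  obtain ⟨J, hJ, hJmem⟩ := h g.range hcomm
  refine ⟨J.comap g.rangeRestrict, hJ.comap _, fun x => ?_⟩
  exact hJmem (g.rangeRestrict x)
end

section
/- Let F be a functor from the opposite of the category of rings to the category of sets together with a natural isomorphism α between the restriction of F to commutative rings and Spec. Then there exists a unique natural transformation η : F → pSpec whose component at every commutative ring C equals α_C (under the identification pSpec(C) = Spec(C)). -/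
open CategoryTheory

/-- The preimage of a prime partial ideal under a ring homomorphism is a prime
partial ideal. -/
theorem IsPrimePartialIdeal.preimage {R S : Type*} [Ring R] [Ring S] (f : R →+* S)
    {𝔭 : Set S} (h : IsPrimePartialIdeal 𝔭) : IsPrimePartialIdeal (f ⁻¹' 𝔭) := by
  intro C hC
  obtain ⟨I, hI, hmem⟩ := h (C.map f) (by
    rintro _ ⟨a, ha, rfl⟩ _ ⟨b, hb, rfl⟩
    rw [← map_mul, ← map_mul, hC a ha b hb])
  let g : C →+* C.map f := RingHom.codRestrict (f.comp C.subtype) (C.map f)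
    (fun x => Subring.mem_map.mpr ⟨x.1, x.2, rfl⟩)
  refine ⟨Ideal.comap g I, ⟨?_, ?_⟩, ?_⟩
  · intro htop
    apply hI.ne_top
    rw [Ideal.eq_top_iff_one] at htop ⊢
    simpa using (Ideal.mem_comap.mp htop)
  · intro x y hxy
    exact hI.mem_or_mem (by simpa [map_mul] using Ideal.mem_comap.mp hxy)
  · intro x
    rw [Ideal.mem_comap, hmem (g x)]
    exact Iff.rfl

/-- The prime spectrum, as a contravariant functor from commutative rings to sets. -/
def specFunctor : CommRingCatᵒᵖ ⥤ Type where
  obj C := PrimeSpectrum C.unop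
  map f := TypeCat.ofHom (PrimeSpectrum.comap f.unop.hom)
  map_id _ := rfl
  map_comp f g := rfl

/-- The partial spectrum, as a contravariant functor from rings to sets, sending a ring
to its set of prime partial ideals and a ring homomorphism to the preimage map. -/
def pSpecFunctor : RingCatᵒᵖ ⥤ Type where
  obj R := {𝔭 : Set R.unop // IsPrimePartialIdeal 𝔭}
  map f := TypeCat.ofHom fun p => ⟨f.unop.hom ⁻¹' p.1, p.2.preimage f.unop.hom⟩
  map_id _ := rfl
  map_comp _ _ := rfl

section Aux

def commObj {R : Type} [Ring R] (C : Subring R)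
    (hC : ∀ a ∈ C, ∀ b ∈ C, a * b = b * a) : CommRingCat :=
  @CommRingCat.of C { C.toRing with mul_comm := fun a b => Subtype.ext (hC _ a.2 _ b.2) }

def inclHom {R : RingCat} (C : Subring R)
    (hC : ∀ a ∈ C, ∀ b ∈ C, a * b = b * a) :
    (forget₂ CommRingCat RingCat).obj (commObj C hC) ⟶ R :=
  RingCat.ofHom C.subtype

lemma singleton_comm {R : Type} [Ring R] (r : R) :
    ∀ a ∈ (Subring.closure {r} : Subring R), ∀ b ∈ Subring.closure {r}, a * b = b * a := by
  intro a ha b hb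
  have h := Subring.closure_le_centralizer_centralizer {r}
  exact Set.centralizer_centralizer_comm_of_comm (by rintro x rfl y rfl; rfl) a (h ha) b (h hb)

variable (F : RingCatᵒᵖ ⥤ Type)
  (α : (forget₂ CommRingCat RingCat).op ⋙ F ≅ specFunctor)

/-- The candidate prime partial ideal attached to `x : F R`. -/
def ηfun {R : RingCat} (x : F.obj (Opposite.op R)) : Set R :=
  { r | (⟨r, Subring.subset_closure rfl⟩ : Subring.closure ({r} : Set R)) ∈
      (α.hom.app (Opposite.op (commObj (Subring.closure {r}) (singleton_comm r)))
        (F.map (inclHom (Subring.closure {r}) (singleton_comm r)).op x)).asIdeal }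

/-- Membership in `ηfun` tested on any commutative subring containing `r`. -/
lemma mem_ηfun {R : RingCat} (x : F.obj (Opposite.op R)) (C : Subring R)
    (hC : ∀ a ∈ C, ∀ b ∈ C, a * b = b * a) (r : R) (hr : r ∈ C) :
    r ∈ ηfun F α x ↔ (⟨r, hr⟩ : C) ∈
      (α.hom.app (Opposite.op (commObj C hC)) (F.map (inclHom C hC).op x)).asIdeal := by
  have hle : Subring.closure ({r} : Set R) ≤ C := Subring.closure_le.mpr (by simpa using hr)
  let j : commObj (Subring.closure {r}) (singleton_comm r) ⟶ commObj C hC :=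
    CommRingCat.ofHom (R := commObj (Subring.closure {r}) (singleton_comm r)) (S := commObj C hC)
      (Subring.inclusion hle)
  have hcomp : (forget₂ CommRingCat RingCat).map j ≫ inclHom C hC
      = inclHom (Subring.closure {r}) (singleton_comm r) := rfl
  have hnat := NatTrans.naturality_apply α.hom j.op (F.map (inclHom C hC).op x)
  have hF : F.map ((forget₂ CommRingCat RingCat).map j).op (F.map (inclHom C hC).op x)
      = F.map (inclHom (Subring.closure {r}) (singleton_comm r)).op x := by
    rw [← FunctorToTypes.map_comp_apply, ← op_comp, hcomp]
  unfold ηfun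
  rw [Set.mem_setOf_eq, ← hF]
  erw [hnat]
  exact Iff.rfl

end Aux

section Aux2
open Opposite
variable (F : RingCatᵒᵖ ⥤ Type)
  (α : (forget₂ CommRingCat RingCat).op ⋙ F ≅ specFunctor)

lemma ηfun_isPrimePartialIdeal {R : RingCat} (x : F.obj (op R)) :
    IsPrimePartialIdeal (ηfun F α x) := by
  intro C hC
  refine ⟨(α.hom.app (op (commObj C hC)) (F.map (inclHom C hC).op x)).asIdeal,
    (α.hom.app (op (commObj C hC)) (F.map (inclHom C hC).op x)).isPrime, fun y => ?_⟩
  exact (mem_ηfun F α x C hC y y.2).symm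

lemma ηfun_naturality {R S : RingCat} (f : R ⟶ S) (x : F.obj (op S)) (r : R) :
    r ∈ ηfun F α (F.map f.op x) ↔ f r ∈ ηfun F α x := by
  have hmapsto : ∀ y ∈ Subring.closure ({r} : Set R), f y ∈ Subring.closure ({f r} : Set S) := by
    intro y hy
    have : f y ∈ (Subring.closure ({r} : Set R)).map f.hom := ⟨y, hy, rfl⟩
    rwa [RingHom.map_closure, Set.image_singleton] at this
  let g : Subring.closure ({r} : Set R) →+* Subring.closure ({f r} : Set S) :=
    RingHom.codRestrict (f.hom.comp (Subring.closure {r}).subtype) _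
      (fun y => hmapsto y y.2)
  let j : commObj (Subring.closure {r}) (singleton_comm r) ⟶
      commObj (Subring.closure {f r}) (singleton_comm (f r)) :=
      CommRingCat.ofHom (R := commObj (Subring.closure {r}) (singleton_comm r))
        (S := commObj (Subring.closure {f r}) (singleton_comm (f r))) g
  have hcomp : inclHom (Subring.closure {r}) (singleton_comm r) ≫ f
      = (forget₂ CommRingCat RingCat).map j ≫ inclHom (Subring.closure {f r})
          (singleton_comm (f r)) := rfl
  have hF : F.map (inclHom (Subring.closure {r}) (singleton_comm r)).op (F.map f.op x)
      = F.map ((forget₂ CommRingCat RingCat).map j).op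
          (F.map (inclHom (Subring.closure {f r}) (singleton_comm (f r))).op x) := by
    rw [← FunctorToTypes.map_comp_apply, ← FunctorToTypes.map_comp_apply, ← op_comp, ← op_comp,
      hcomp]
  have hnat := NatTrans.naturality_apply α.hom j.op
    (F.map (inclHom (Subring.closure {f r}) (singleton_comm (f r))).op x)
  simp only [ηfun, Set.mem_setOf_eq]
  rw [hF]
  erw [hnat]
  exact Iff.rfl

lemma ηfun_on_comm (C : CommRingCat)
    (x : F.obj (op ((forget₂ CommRingCat RingCat).obj C))) (r : C) :
    r ∈ ηfun F α x ↔ r ∈ (α.hom.app (op C) x).asIdeal := by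
  haveI : (forget₂ CommRingCat RingCat).obj C = RingCat.of C := rfl
  let R : RingCat := (forget₂ CommRingCat RingCat).obj C
  have hC : ∀ a ∈ (⊤ : Subring R), ∀ b ∈ (⊤ : Subring R), a * b = b * a :=
    fun a _ b _ => @mul_comm C _ a b
  let j : commObj (⊤ : Subring R) hC ⟶ C :=
    CommRingCat.ofHom (R := commObj (⊤ : Subring R) hC) (S := C)
      (Subring.topEquiv : (⊤ : Subring R) ≃+* R).toRingHom
  have hcomp : inclHom (⊤ : Subring R) hC = (forget₂ CommRingCat RingCat).map j := rfl
  have hnat := NatTrans.naturality_apply α.hom j.op x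
  rw [mem_ηfun F α x ⊤ hC r trivial, hcomp]
  erw [hnat]
  exact Iff.rfl

end Aux2

/-- Given a functor `F : Ringᵒᵖ ⥤ Set` together with a natural isomorphism `α` between
its restriction to commutative rings and `Spec`, there is a unique natural transformation
`η : F ⟶ pSpec` whose component at every commutative ring `C` equals `α_C` under the
identification of `pSpec C` with `Spec C` (a prime ideal being identified with its
underlying set). -/
theorem exists_unique_natTrans_to_pSpec
    (F : RingCatᵒᵖ ⥤ Type)
    (α : (forget₂ CommRingCat RingCat).op ⋙ F ≅ specFunctor) :
    ∃! η : F ⟶ pSpecFunctor,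
      ∀ (C : CommRingCat)
        (x : F.obj (Opposite.op ((forget₂ CommRingCat RingCat).obj C))),
        (Subtype.val (η.app (Opposite.op ((forget₂ CommRingCat RingCat).obj C)) x) : Set C)
          = ((α.hom.app (Opposite.op C) x).asIdeal : Set C) := by
  refine ⟨{ app := fun X => TypeCat.ofHom fun x => ⟨ηfun F α x, ηfun_isPrimePartialIdeal F α x⟩
            naturality := ?_ }, ?_, ?_⟩
  · intro X Y f
    ext x
    refine Subtype.ext (Set.ext fun r => ?_)
    exact ηfun_naturality F α f.unop x r
  · intro C x
    exact Set.ext fun r => (ηfun_on_comm F α C x r).trans SetLike.mem_coe.symm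
  · intro η' hη'
    apply NatTrans.ext
    funext X
    ext x
    refine Subtype.ext (Set.ext fun r => ?_)
    have hnat := NatTrans.naturality_apply η'
      (inclHom (Subring.closure {r}) (singleton_comm r)).op x
    have h1 : (η'.app (Opposite.op ((forget₂ CommRingCat RingCat).obj
          (commObj (Subring.closure {r}) (singleton_comm r))))
          (F.map (inclHom (Subring.closure {r}) (singleton_comm r)).op x)).1
        = (inclHom (Subring.closure {r}) (singleton_comm r)).hom ⁻¹' (η'.app X x).1 :=
      congrArg Subtype.val hnat
    have h2 := hη' (commObj (Subring.closure {r}) (singleton_comm r))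
      (F.map (inclHom (Subring.closure {r}) (singleton_comm r)).op x)
    have key : (⟨r, Subring.subset_closure rfl⟩ : Subring.closure ({r} : Set X.unop)) ∈
        (α.hom.app (Opposite.op (commObj (Subring.closure {r}) (singleton_comm r)))
          (F.map (inclHom (Subring.closure {r}) (singleton_comm r)).op x)).asIdeal ↔
        r ∈ (η'.app X x).1 := by
      erw [← SetLike.mem_coe, ← h2, h1]
      exact Iff.rfl
    exact key.symm
end

section
/- The set of prime partial ideals of the ring M₂(ℂ) of 2 × 2 complex matrices has cardinality 2^(2^ℵ₀). In particular, M₂(ℂ) has a prime partial ideal. -/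
namespace PPI

open Matrix Cardinal

noncomputable section

abbrev M2 : Type := Matrix (Fin 2) (Fin 2) ℂ

open Classical in
/-- Selection of one idempotent out of each complementary pair. -/
def sel (g : Set ℂ) (e : M2) : Prop :=
  if e 0 0 = 1 ∧ e 1 1 = 0 ∧ e 1 0 = 0 then e 0 1 ∈ g
  else if e 0 0 = 0 ∧ e 1 1 = 1 ∧ e 1 0 = 0 then -(e 0 1) ∉ g
  else WellOrderingRel e (1 - e)

/-- The candidate prime partial ideal attached to `g : Set ℂ`. -/
def pid (g : Set ℂ) : Set M2 :=
  {m | m.det = 0 ∧ (m.trace = 0 ∨ sel g ((m.trace)⁻¹ • m))}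

lemma one_ne_zero_M2 : (1 : M2) ≠ 0 := by
  intro h
  have := congrFun (congrFun h 0) 0
  simp [Matrix.one_apply] at this

/-- Cayley–Hamilton for 2×2. -/
lemma CH (a : M2) : a * a = a.trace • a - a.det • (1 : M2) := by
  ext i j
  fin_cases i <;> fin_cases j <;>
    simp [Matrix.mul_apply, Fin.sum_univ_two, Matrix.trace_fin_two, Matrix.det_fin_two,
      Matrix.smul_apply, Matrix.sub_apply, Matrix.one_apply, smul_eq_mul] <;> ring

lemma idem_ne_half (e : M2) (he : e * e = e) (h1 : e ≠ 1) : e ≠ 1 - e := by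
  intro h
  have h0 : e = 0 := by
    calc e = e * e := he.symm
    _ = e * (1 - e) := by rw [← h]
    _ = e - e * e := by noncomm_ring
    _ = 0 := by rw [he, sub_self]
  apply h1
  have h2 : (1 : M2) - e = e := h.symm
  rw [h0, sub_zero] at h2
  rw [h0, ← h2]

/-- Key exchange property: `sel` picks exactly one of `e`, `1 - e` for a nontrivial
idempotent `e`. -/
lemma sel_xor (g : Set ℂ) (e : M2) (he : e * e = e) (h1 : e ≠ 1) :
    sel g (1 - e) ↔ ¬ sel g e := by
  have hne : e ≠ 1 - e := idem_ne_half e he h1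
  have s00 : (1 - e : M2) 0 0 = 1 - e 0 0 := by simp [Matrix.sub_apply, Matrix.one_apply]
  have s01 : (1 - e : M2) 0 1 = -(e 0 1) := by simp [Matrix.sub_apply, Matrix.one_apply]
  have s10 : (1 - e : M2) 1 0 = -(e 1 0) := by simp [Matrix.sub_apply, Matrix.one_apply]
  have s11 : (1 - e : M2) 1 1 = 1 - e 1 1 := by simp [Matrix.sub_apply, Matrix.one_apply]
  unfold sel
  by_cases hP1 : e 0 0 = 1 ∧ e 1 1 = 0 ∧ e 1 0 = 0
  · rw [if_pos hP1]
    have c1 : ¬ ((1 - e : M2) 0 0 = 1 ∧ (1 - e : M2) 1 1 = 0 ∧ (1 - e : M2) 1 0 = 0) := by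
      rintro ⟨u1, -, -⟩
      rw [s00, hP1.1] at u1
      norm_num at u1
    have c2 : (1 - e : M2) 0 0 = 0 ∧ (1 - e : M2) 1 1 = 1 ∧ (1 - e : M2) 1 0 = 0 := by
      refine ⟨by rw [s00, hP1.1]; ring, by rw [s11, hP1.2.1]; ring, by rw [s10, hP1.2.2]; ring⟩
    rw [if_neg c1, if_pos c2, s01, neg_neg]
  · by_cases hP2 : e 0 0 = 0 ∧ e 1 1 = 1 ∧ e 1 0 = 0
    · rw [if_neg hP1, if_pos hP2]
      have c1 : (1 - e : M2) 0 0 = 1 ∧ (1 - e : M2) 1 1 = 0 ∧ (1 - e : M2) 1 0 = 0 := by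
        refine ⟨by rw [s00, hP2.1]; ring, by rw [s11, hP2.2.1]; ring, by rw [s10, hP2.2.2]; ring⟩
      rw [if_pos c1, s01]
      tauto
    · rw [if_neg hP1, if_neg hP2]
      have c1 : ¬ ((1 - e : M2) 0 0 = 1 ∧ (1 - e : M2) 1 1 = 0 ∧ (1 - e : M2) 1 0 = 0) := by
        rw [s00, s11, s10]
        rintro ⟨u1, u2, u3⟩
        exact hP2 ⟨by linear_combination -u1, by linear_combination -u2,
          by linear_combination -u3⟩
      have c2 : ¬ ((1 - e : M2) 0 0 = 0 ∧ (1 - e : M2) 1 1 = 1 ∧ (1 - e : M2) 1 0 = 0) := by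
        rw [s00, s11, s10]
        rintro ⟨u1, u2, u3⟩
        exact hP1 ⟨by linear_combination -u1, by linear_combination -u2,
          by linear_combination -u3⟩
      rw [if_neg c1, if_neg c2, sub_sub_cancel]
      constructor
      · intro h h'
        exact (asymm_of WellOrderingRel h') h
      · intro h
        rcases trichotomous_of WellOrderingRel e (1 - e) with h' | h' | h'
        · exact absurd h' h
        · exact absurd h' hne
        · exact h'

/-- A scalar matrix is in `pid g` iff it is `0`. -/
lemma scalar_mem (g : Set ℂ) (c : ℂ) : (c • (1 : M2)) ∈ pid g ↔ c = 0 := by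
  constructor
  · rintro ⟨hdet, -⟩
    have h : c ^ 2 = 0 := by
      have h0 := hdet
      rwa [Matrix.det_smul, Matrix.det_one, mul_one, Fintype.card_fin] at h0
    exact pow_eq_zero_iff two_ne_zero |>.mp h
  · rintro rfl
    exact ⟨by simp, Or.inl (by simp)⟩

lemma nonscalar_entries {a : M2} (ha : ¬ ∃ c : ℂ, a = c • (1 : M2)) :
    a 0 1 ≠ 0 ∨ a 1 0 ≠ 0 ∨ a 0 0 ≠ a 1 1 := by
  by_contra h
  push_neg at h
  obtain ⟨h1, h2, h3⟩ := h
  refine ha ⟨a 0 0, ?_⟩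
  ext i j
  fin_cases i <;> fin_cases j <;>
    simp [Matrix.smul_apply, Matrix.one_apply, h1, h2, smul_eq_mul]
  exact h3.symm

/-- The centralizer of a nonscalar 2×2 matrix is spanned by `1` and the matrix. -/
lemma centralizer {a m : M2} (ha : ¬ ∃ c : ℂ, a = c • (1 : M2))
    (hcomm : a * m = m * a) : ∃ α β : ℂ, m = α • (1 : M2) + β • a := by
  have E : ∀ i j, (a * m) i j = (m * a) i j := fun i j => by rw [hcomm]
  have e00 := E 0 0; have e01 := E 0 1; have e10 := E 1 0
  simp only [Matrix.mul_apply, Fin.sum_univ_two] at e00 e01 e10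
  have build : ∀ α β : ℂ, m 0 0 = α + β * a 0 0 → m 0 1 = β * a 0 1 →
      m 1 0 = β * a 1 0 → m 1 1 = α + β * a 1 1 →
      m = α • (1:M2) + β • a := by
    intro α β h1 h2 h3 h4
    ext i j
    fin_cases i <;> fin_cases j <;>
      simp [Matrix.add_apply, Matrix.smul_apply, Matrix.one_apply, smul_eq_mul]
    exacts [h1, h2, h3, h4]
  rcases nonscalar_entries ha with hq | hr | hps
  · refine ⟨m 0 0 - (m 0 1 / a 0 1) * a 0 0, m 0 1 / a 0 1,
      build _ _ (by ring) (by field_simp) ?_ ?_⟩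
    · field_simp
      linear_combination e00
    · field_simp
      linear_combination e01
  · refine ⟨m 0 0 - (m 1 0 / a 1 0) * a 0 0, m 1 0 / a 1 0,
      build _ _ (by ring) ?_ (by field_simp) ?_⟩
    · field_simp
      linear_combination -e00
    · field_simp
      linear_combination -e10
  · have hps' : a 0 0 - a 1 1 ≠ 0 := sub_ne_zero.mpr hps
    refine ⟨m 0 0 - ((m 0 0 - m 1 1)/(a 0 0 - a 1 1)) * a 0 0,
      (m 0 0 - m 1 1)/(a 0 0 - a 1 1), build _ _ (by ring) ?_ ?_ ?_⟩
    · field_simp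
      linear_combination e01
    · field_simp
      linear_combination -e10
    · field_simp
      ring

/-- uniqueness of the decomposition along `1, a`. -/
lemma decomp_unique {a : M2} (ha : ¬ ∃ c : ℂ, a = c • (1 : M2)) {α β α' β' : ℂ}
    (h : α • (1:M2) + β • a = α' • (1:M2) + β' • a) : α = α' ∧ β = β' := by
  have E : ∀ i j, α * (1:M2) i j + β * a i j = α' * (1:M2) i j + β' * a i j := fun i j => by
    have := congrFun (congrFun h i) j
    simpa [Matrix.add_apply, Matrix.smul_apply, smul_eq_mul] using this
  have E00 := E 0 0; have E01 := E 0 1; have E10 := E 1 0; have E11 := E 1 1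
  simp [Matrix.one_apply] at E00 E01 E10 E11
  have hβ : β = β' := by
    rcases nonscalar_entries ha with hq | hr | hps
    · exact E01.resolve_right hq
    · exact E10.resolve_right hr
    · have h2 := sub_ne_zero.mpr hps
      exact mul_right_cancel₀ h2 (by linear_combination E00 - E11)
  exact ⟨by rw [hβ] at E00; linear_combination E00, hβ⟩

lemma det_decomp (a : M2) (α β ρ ρ' : ℂ) (hsum : ρ + ρ' = a.trace) (hprod : ρ * ρ' = a.det) :
    (α • (1:M2) + β • a).det = (α + β * ρ) * (α + β * ρ') := by
  have h1 : (α • (1:M2) + β • a).det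
      = α^2 + α * β * a.trace + β^2 * a.det := by
    simp [Matrix.det_fin_two, Matrix.trace_fin_two, Matrix.add_apply, Matrix.smul_apply,
      Matrix.one_apply, smul_eq_mul]
    ring
  rw [h1, ← hsum, ← hprod]
  ring

lemma trace_decomp (a : M2) (α β ρ ρ' : ℂ) (hsum : ρ + ρ' = a.trace) :
    (α • (1:M2) + β • a).trace = (α + β * ρ) + (α + β * ρ') := by
  have h1 : (α • (1:M2) + β • a).trace = 2 * α + β * a.trace := by
    simp [Matrix.trace_fin_two, Matrix.add_apply, Matrix.smul_apply,
      Matrix.one_apply, smul_eq_mul]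
    ring
  rw [h1, ← hsum]
  ring

/-- the idempotent attached to a root of the characteristic polynomial. -/
lemma idem_of_root {a : M2} (ha : ¬ ∃ c : ℂ, a = c • (1 : M2)) {ρ ρ' : ℂ}
    (hsum : ρ + ρ' = a.trace) (hprod : ρ * ρ' = a.det) (hne : ρ ≠ ρ') :
    ((ρ' - ρ)⁻¹ • (a - ρ • 1)) * ((ρ' - ρ)⁻¹ • (a - ρ • 1)) = (ρ' - ρ)⁻¹ • (a - ρ • 1) ∧
      (ρ' - ρ)⁻¹ • (a - ρ • 1) ≠ 1 := by
  have hd : ρ' - ρ ≠ 0 := sub_ne_zero.mpr (Ne.symm hne)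
  constructor
  · have hCH := CH a
    rw [← hsum, ← hprod] at hCH
    have hkey : (a - ρ • 1) * (a - ρ • 1) = (ρ' - ρ) • (a - ρ • 1) := by
      calc (a - ρ • 1) * (a - ρ • 1)
          = a * a - (2 * ρ) • a + (ρ * ρ) • (1:M2) := by
            simp only [sub_mul, mul_sub, Matrix.smul_mul, Matrix.mul_smul, smul_smul,
              mul_one, one_mul]
            module
        _ = (ρ + ρ') • a - (ρ * ρ') • (1:M2) - (2 * ρ) • a + (ρ * ρ) • (1:M2) := by
            rw [hCH]
        _ = (ρ' - ρ) • (a - ρ • 1) := by module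
    rw [Matrix.smul_mul, Matrix.mul_smul, hkey, smul_smul, smul_smul]
    congr 1
    field_simp
  · intro h
    refine ha ⟨ρ', ?_⟩
    have h2 : a - ρ • 1 = (ρ' - ρ) • (1 : M2) := by
      have h3 := congrArg (fun x => (ρ' - ρ) • x) h
      simpa [smul_smul, mul_inv_cancel₀ hd] using h3
    rw [sub_eq_iff_eq_add] at h2
    rw [h2]
    module

/-- the complementary idempotent. -/
lemma compl_idem (a : M2) {ρ ρ' : ℂ} (hne : ρ ≠ ρ') :
    (1 : M2) - (ρ' - ρ)⁻¹ • (a - ρ • 1) = (ρ - ρ')⁻¹ • (a - ρ' • 1) := by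
  have hd' : ρ - ρ' ≠ 0 := sub_ne_zero.mpr hne
  have h1 : a - ρ' • (1:M2) = (a - ρ • 1) + (ρ - ρ') • (1:M2) := by module
  rw [h1, smul_add, smul_smul, inv_mul_cancel₀ hd', one_smul,
    show (ρ - ρ')⁻¹ = -((ρ' - ρ)⁻¹) by rw [show ρ - ρ' = -(ρ' - ρ) by ring, inv_neg]]
  module

/-- The key membership criterion. -/
lemma key {a : M2} (ha : ¬ ∃ c : ℂ, a = c • (1 : M2)) (g : Set ℂ) {ρ ρ' : ℂ}
    (hsum : ρ + ρ' = a.trace) (hprod : ρ * ρ' = a.det)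
    (hsel : ρ = ρ' ∨ (ρ ≠ ρ' ∧ sel g ((ρ' - ρ)⁻¹ • (a - ρ • 1)))) (α β : ℂ) :
    (α • (1:M2) + β • a) ∈ pid g ↔ α + β * ρ = 0 := by
  set m := α • (1:M2) + β • a with hm
  have hdet : m.det = (α + β * ρ) * (α + β * ρ') := det_decomp a α β ρ ρ' hsum hprod
  have htr : m.trace = (α + β * ρ) + (α + β * ρ') := trace_decomp a α β ρ ρ' hsum
  rcases hsel with hq | ⟨hρ, hq⟩
  · subst hq
    constructor
    · rintro ⟨h1, -⟩
      rw [hdet] at h1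
      rcases mul_eq_zero.mp h1 with h | h <;> exact h
    · intro h
      exact ⟨by rw [hdet, h, zero_mul], Or.inl (by rw [htr, h, zero_add])⟩
  · have hd : ρ' - ρ ≠ 0 := sub_ne_zero.mpr (Ne.symm hρ)
    have hd' : ρ - ρ' ≠ 0 := sub_ne_zero.mpr hρ
    set e' : M2 := (ρ' - ρ)⁻¹ • (a - ρ • 1) with he'
    obtain ⟨hidem, hne1⟩ := idem_of_root ha hsum hprod hρ
    have hcompl : (1 : M2) - e' = (ρ - ρ')⁻¹ • (a - ρ' • 1) := by
      rw [he']
      exact compl_idem a hρ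
    have hnsel : ¬ sel g ((ρ - ρ')⁻¹ • (a - ρ' • 1)) := by
      rw [← hcompl]
      intro h
      exact ((sel_xor g e' hidem hne1).mp h) hq
    constructor
    · rintro ⟨h1, h2⟩
      by_contra hu
      have hu' : α + β * ρ' = 0 := by
        rw [hdet] at h1
        rcases mul_eq_zero.mp h1 with h | h
        · exact absurd h hu
        · exact h
      have hβ : β ≠ 0 := by
        intro h0
        rw [h0] at hu'
        apply hu
        rw [h0]
        simpa using hu'
      have hmeq : m = β • (a - ρ' • 1) := by
        rw [hm, show α = -(β * ρ') by linear_combination hu']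
        module
      have hueq : m.trace = β * (ρ - ρ') := by
        rw [htr, hu', add_zero]
        linear_combination hu'
      have htrne : m.trace ≠ 0 := by
        rw [hueq]
        exact mul_ne_zero hβ hd'
      rcases h2 with h2 | h2
      · exact htrne h2
      · apply hnsel
        have hscal : (m.trace)⁻¹ • m = (ρ - ρ')⁻¹ • (a - ρ' • 1) := by
          rw [hueq, hmeq, smul_smul, show (β * (ρ - ρ'))⁻¹ * β = (ρ - ρ')⁻¹ by field_simp]
        rw [← hscal]
        exact h2
    · intro h
      refine ⟨by rw [hdet, h, zero_mul], ?_⟩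
      by_cases hu' : α + β * ρ' = 0
      · exact Or.inl (by rw [htr, h, hu', add_zero])
      · refine Or.inr ?_
        have hβ : β ≠ 0 := by
          intro h0
          rw [h0] at h hu'
          apply hu'
          simpa using h
        have hmeq : m = β • (a - ρ • 1) := by
          rw [hm, show α = -(β * ρ) by linear_combination h]
          module
        have hueq : m.trace = β * (ρ' - ρ) := by
          rw [htr, h, zero_add]
          linear_combination h
        have hscal : (m.trace)⁻¹ • m = e' := by
          rw [hueq, hmeq, smul_smul, show (β * (ρ' - ρ))⁻¹ * β = (ρ' - ρ)⁻¹ by field_simp,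
            he']
        rw [hscal]
        exact hq

/-- Existence of a compatible pair of characteristic roots. -/
lemma exists_roots {a : M2} (ha : ¬ ∃ c : ℂ, a = c • (1 : M2)) (g : Set ℂ) :
    ∃ ρ ρ' : ℂ, ρ + ρ' = a.trace ∧ ρ * ρ' = a.det ∧
      (ρ = ρ' ∨ (ρ ≠ ρ' ∧ sel g ((ρ' - ρ)⁻¹ • (a - ρ • 1)))) := by
  obtain ⟨δ, hδ⟩ := Complex.exists_root (f := Polynomial.X ^ 2 -
    Polynomial.C (a.trace ^ 2 - 4 * a.det)) (by
      rw [Polynomial.degree_X_pow_sub_C (by norm_num : 0 < 2)]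
      norm_num)
  have hδ2 : δ ^ 2 = a.trace ^ 2 - 4 * a.det := by
    have := hδ
    simp [Polynomial.IsRoot, sub_eq_zero] at this
    exact this
  set σ := (a.trace + δ) / 2 with hσ
  set σ' := (a.trace - δ) / 2 with hσ'
  have hsum : σ + σ' = a.trace := by rw [hσ, hσ']; ring
  have hprod : σ * σ' = a.det := by
    rw [hσ, hσ']
    field_simp
    linear_combination -hδ2
  by_cases hδ0 : δ = 0
  · exact ⟨σ, σ', hsum, hprod, Or.inl (by rw [hσ, hσ', hδ0]; ring)⟩
  · have hne : σ ≠ σ' := by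
      rw [hσ, hσ']
      intro h
      apply hδ0
      field_simp at h
      linear_combination h / 2
    by_cases hs : sel g ((σ' - σ)⁻¹ • (a - σ • 1))
    · exact ⟨σ, σ', hsum, hprod, Or.inr ⟨hne, hs⟩⟩
    · refine ⟨σ', σ, by rw [← hsum]; ring, by rw [← hprod]; ring,
        Or.inr ⟨Ne.symm hne, ?_⟩⟩
      -- need : sel g ((σ - σ')⁻¹ • (a - σ' • 1)), which is sel g (1 - e') with
      -- e' := (σ' - σ)⁻¹ • (a - σ • 1), and sel_xor applies.
      obtain ⟨hidem, hne1⟩ := idem_of_root ha hsum hprod hne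
      rw [← compl_idem a hne]
      exact (sel_xor g _ hidem hne1).mpr hs

/-- `pid g` is a prime partial ideal. -/
theorem pid_isPrimePartialIdeal (g : Set ℂ) : IsPrimePartialIdeal (pid g) := by
  intro C hcomm
  by_cases hsc : ∀ m ∈ C, ∃ c : ℂ, m = c • (1 : M2)
  · -- every element of C is a scalar matrix
    have hoff : ∀ x : C, (x : M2) 0 1 = 0 := by
      intro x
      obtain ⟨γ, hγ⟩ := hsc x x.2
      rw [hγ]
      simp [Matrix.smul_apply, Matrix.one_apply]
    let χr : C →+* ℂ :=
      { toFun := fun x => (x : M2) 0 0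
        map_one' := by
          show ((1 : C) : M2) 0 0 = 1
          rw [OneMemClass.coe_one]
          simp [Matrix.one_apply]
        map_mul' := by
          intro x y
          show ((x * y : C) : M2) 0 0 = (x : M2) 0 0 * (y : M2) 0 0
          push_cast
          rw [Matrix.mul_apply, Fin.sum_univ_two, hoff x, zero_mul, add_zero]
        map_zero' := by
          show ((0 : C) : M2) 0 0 = 0
          push_cast
          simp
        map_add' := by
          intro x y
          show ((x + y : C) : M2) 0 0 = (x : M2) 0 0 + (y : M2) 0 0
          push_cast
          rw [Matrix.add_apply] }
    refine ⟨RingHom.ker χr, RingHom.ker_isPrime χr, ?_⟩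
    intro x
    rw [RingHom.mem_ker]
    obtain ⟨γ, hγ⟩ := hsc x x.2
    have hx : χr x = γ := by
      show (x : M2) 0 0 = γ
      rw [hγ]
      simp [Matrix.smul_apply, Matrix.one_apply]
    rw [hx, hγ, scalar_mem]
  · -- there is a nonscalar element a ∈ C
    push_neg at hsc
    obtain ⟨a, haC, ha0⟩ := hsc
    have ha : ¬ ∃ c : ℂ, a = c • (1 : M2) := by
      rintro ⟨c, hc⟩
      exact ha0 c hc
    obtain ⟨ρ, ρ', hsum, hprod, hsel⟩ := exists_roots ha g
    have hdec : ∀ x : C, ∃ p : ℂ × ℂ, (x : M2) = p.1 • (1:M2) + p.2 • a := by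
      intro x
      obtain ⟨α, β, h⟩ := centralizer ha (hcomm a haC x x.2)
      exact ⟨(α, β), h⟩
    let χ : C → ℂ := fun x => ((hdec x).choose).1 + ((hdec x).choose).2 * ρ
    have hχ : ∀ (x : C) (α β : ℂ), (x : M2) = α • (1:M2) + β • a → χ x = α + β * ρ := by
      intro x α β h
      have hspec := (hdec x).choose_spec
      obtain ⟨h1, h2⟩ := decomp_unique ha (hspec.symm.trans h)
      simp only [χ]
      rw [h1, h2]
    have hmem : ∀ x : C, (x : M2) ∈ pid g ↔ χ x = 0 := by
      intro x
      have hspec := (hdec x).choose_spec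
      rw [hspec, key ha g hsum hprod hsel]
    have hCH := CH a
    rw [← hsum, ← hprod] at hCH
    let χr : C →+* ℂ :=
      { toFun := χ
        map_one' := by
          show χ 1 = 1
          rw [hχ 1 1 0 (by push_cast; module)]
          ring
        map_mul' := by
          intro x y
          show χ (x * y) = χ x * χ y
          have hx := (hdec x).choose_spec
          have hy := (hdec y).choose_spec
          have hxy : ((x * y : C) : M2) =
              ((hdec x).choose.1 * (hdec y).choose.1
                - (hdec x).choose.2 * (hdec y).choose.2 * (ρ * ρ')) • (1:M2) +
              ((hdec x).choose.1 * (hdec y).choose.2 + (hdec x).choose.2 * (hdec y).choose.1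
                + (hdec x).choose.2 * (hdec y).choose.2 * (ρ + ρ')) • a := by
            push_cast
            conv_lhs => rw [hx, hy]
            simp only [mul_add, add_mul, Matrix.smul_mul, Matrix.mul_smul, smul_smul,
              one_mul, mul_one]
            rw [hCH]
            module
          rw [hχ _ _ _ hxy, hχ x _ _ hx, hχ y _ _ hy]
          ring
        map_zero' := by
          show χ 0 = 0
          rw [hχ 0 0 0 (by push_cast; module)]
          ring
        map_add' := by
          intro x y
          show χ (x + y) = χ x + χ y
          have hx := (hdec x).choose_spec
          have hy := (hdec y).choose_spec
          have hxy : ((x + y : C) : M2) =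
              ((hdec x).choose.1 + (hdec y).choose.1) • (1:M2) +
              ((hdec x).choose.2 + (hdec y).choose.2) • a := by
            push_cast
            conv_lhs => rw [hx, hy]
            module
          rw [hχ _ _ _ hxy, hχ x _ _ hx, hχ y _ _ hy]
          ring }
    refine ⟨RingHom.ker χr, RingHom.ker_isPrime χr, ?_⟩
    intro x
    rw [RingHom.mem_ker]
    exact (hmem x).symm

/-- test matrices for the injectivity of `g ↦ pid g`. -/
def et (t : ℂ) : M2 := !![1, t; 0, 0]

lemma et_mem (g : Set ℂ) (t : ℂ) : et t ∈ pid g ↔ t ∈ g := by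
  have hdet : (et t).det = 0 := by simp [et, Matrix.det_fin_two]
  have htr : (et t).trace = 1 := by simp [et, Matrix.trace_fin_two]
  have hsel : sel g ((et t).trace⁻¹ • et t) ↔ t ∈ g := by
    rw [htr, inv_one, one_smul]
    unfold sel
    rw [if_pos (by constructor <;> simp [et])]
    simp [et]
  constructor
  · rintro ⟨-, h⟩
    rcases h with h | h
    · rw [htr] at h; exact absurd h one_ne_zero
    · exact hsel.mp h
  · intro h
    exact ⟨hdet, Or.inr (hsel.mpr h)⟩

lemma pid_injective : Function.Injective pid := by
  intro g g' h
  ext t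
  rw [← et_mem g t, ← et_mem g' t, h]

lemma mk_M2 : #M2 = 2 ^ (ℵ₀ : Cardinal) := by
  have h1 : #M2 = ((2 ^ (ℵ₀ : Cardinal)) ^ (2 : Cardinal)) ^ (2 : Cardinal) := by
    rw [show #M2 = #(Fin 2 → Fin 2 → ℂ) from rfl, ← Cardinal.power_def,
      ← Cardinal.power_def, mk_complex, ← Cardinal.two_power_aleph0, Cardinal.mk_fin]
    norm_cast
  have h2 : (ℵ₀ : Cardinal) * (2 * 2) = ℵ₀ := by
    rw [show ((2 : Cardinal) * 2) = ((4 : ℕ) : Cardinal) by norm_cast]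
    exact Cardinal.mul_eq_left le_rfl (Cardinal.nat_lt_aleph0 4).le
      (Nat.cast_ne_zero.mpr (by norm_num))
  rw [h1, ← Cardinal.power_mul, ← Cardinal.power_mul, h2]

end

end PPI

/-- The set of prime partial ideals of `M₂(ℂ)` has cardinality `2 ^ (2 ^ ℵ₀)`;
in particular, `M₂(ℂ)` has a prime partial ideal. -/
theorem card_prime_partial_ideals_matrix_two :
    Cardinal.mk {𝔭 : Set (Matrix (Fin 2) (Fin 2) ℂ) // IsPrimePartialIdeal 𝔭}
        = (2 : Cardinal) ^ ((2 : Cardinal) ^ Cardinal.aleph0) ∧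
      ∃ 𝔭 : Set (Matrix (Fin 2) (Fin 2) ℂ), IsPrimePartialIdeal 𝔭 := by
  constructor
  · apply le_antisymm
    · calc Cardinal.mk {𝔭 : Set (Matrix (Fin 2) (Fin 2) ℂ) // IsPrimePartialIdeal 𝔭}
          ≤ Cardinal.mk (Set (Matrix (Fin 2) (Fin 2) ℂ)) := Cardinal.mk_subtype_le _
      _ = 2 ^ Cardinal.mk (Matrix (Fin 2) (Fin 2) ℂ) := Cardinal.mk_set
      _ = (2 : Cardinal) ^ ((2 : Cardinal) ^ Cardinal.aleph0) := by rw [PPI.mk_M2]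
    · have hinj : Function.Injective
          (fun g : Set ℂ => (⟨PPI.pid g, PPI.pid_isPrimePartialIdeal g⟩ :
            {𝔭 : Set (Matrix (Fin 2) (Fin 2) ℂ) // IsPrimePartialIdeal 𝔭})) := by
        intro g g' h
        exact PPI.pid_injective (congrArg Subtype.val h)
      calc (2 : Cardinal) ^ ((2 : Cardinal) ^ Cardinal.aleph0)
          = 2 ^ Cardinal.mk ℂ := by rw [Cardinal.mk_complex, Cardinal.two_power_aleph0]
      _ = Cardinal.mk (Set ℂ) := Cardinal.mk_set.symm
      _ ≤ _ := Cardinal.mk_le_of_injective hinj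
  · exact ⟨PPI.pid ∅, PPI.pid_isPrimePartialIdeal ∅⟩
end

section
/- Every maximal left ideal of a ring R is a completely prime left ideal. Consequently, every nonzero ring has a completely prime left ideal. -/
/-- A left ideal `𝔭` of a ring `R` is *completely prime* if `𝔭 ≠ R` and for all
`a, b ∈ R`, if `𝔭 * b ⊆ 𝔭` and `a * b ∈ 𝔭`, then `a ∈ 𝔭` or `b ∈ 𝔭`.
(Here `Ideal R` means a left ideal of the possibly noncommutative ring `R`.) -/
def IsCompletelyPrimeLeftIdeal {R : Type*} [Ring R] (𝔭 : Ideal R) : Prop :=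
  𝔭 ≠ ⊤ ∧ ∀ a b : R, (∀ x ∈ 𝔭, x * b ∈ 𝔭) → a * b ∈ 𝔭 → a ∈ 𝔭 ∨ b ∈ 𝔭

/-- Every maximal left ideal of a ring is a completely prime left ideal; consequently,
every nonzero ring has a completely prime left ideal. -/
theorem maximal_isCompletelyPrime_and_exists {R : Type*} [Ring R] :
    (∀ 𝔭 : Ideal R, 𝔭.IsMaximal → IsCompletelyPrimeLeftIdeal 𝔭) ∧
      (Nontrivial R → ∃ 𝔭 : Ideal R, IsCompletelyPrimeLeftIdeal 𝔭) := by
  have main : ∀ 𝔭 : Ideal R, 𝔭.IsMaximal → IsCompletelyPrimeLeftIdeal 𝔭 := by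
    intro 𝔭 hm
    refine ⟨hm.ne_top, fun a b hpb hab => ?_⟩
    by_cases ha : a ∈ 𝔭
    · exact Or.inl ha
    · right
      set I : Ideal R :=
        { carrier := {x : R | x * b ∈ 𝔭}
          zero_mem' := by simp
          add_mem' := fun {x y} hx hy => by
            simp only [Set.mem_setOf_eq, add_mul] at *
            exact 𝔭.add_mem hx hy
          smul_mem' := fun r x hx => by
            simp only [Set.mem_setOf_eq, smul_eq_mul, mul_assoc] at *
            exact 𝔭.smul_mem r hx } with hI
      have hle : 𝔭 < I := by
        constructor
        · intro x hx; exact hpb x hx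
        · intro h
          exact ha (h (show a ∈ I from hab))
      have : I = ⊤ := hm.1.2 I hle
      have h1 : (1 : R) ∈ I := this ▸ Submodule.mem_top
      have h2 : (1 : R) * b ∈ 𝔭 := h1
      simpa using h2
  exact ⟨main, fun _ => (Ideal.exists_maximal R).imp fun 𝔭 h => main 𝔭 h⟩
end
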